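/- Let K be an n×n real matrix. K is cyclically monotone (for every cycle i_1,...,i_{p+1}=i_1, Σ_{k=1}^{p} (K i_k i_{k+1} − K i_k i_k) ≥ 0) if and only if for every permutation σ of {1,...,n}, Σ_i K i (σ i) ≥ Σ_i K i i. -/

import Mathlib

open Finset Equiv

section Stmt5Aux
variable {n : ℕ}



lemma split_step (K : Fin n → Fin n → ℝ) (p : ℕ)
    (ih : ∀ q, q < p → ∀ c : ℕ → Fin n, c q = c 0 →
      0 ≤ ∑ m ∈ Finset.range q, (K (c m) (c (m + 1)) - K (c m) (c m)))
    (c : ℕ → Fin n) (hc : c p = c 0)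
    (j k : ℕ) (hj : j < p) (hk : k < p) (hcjk : c j = c k) (hlt : j < k) :
    0 ≤ ∑ m ∈ Finset.range p, (K (c m) (c (m + 1)) - K (c m) (c m)) := by
  set f : ℕ → ℝ := fun m => K (c m) (c (m + 1)) - K (c m) (c m) with hfdef
  set q := k - j with hq
  -- inner closed walk
  have S1 : 0 ≤ ∑ m ∈ Finset.range q, f (j + m) := by
    have := ih q (by omega) (fun m => c (j + m)) (by
      show c (j + q) = c (j + 0)
      rw [show j + q = k from by omega, show j + 0 = j from by omega, hcjk])
    calc (0:ℝ) ≤ _ := this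
    _ = ∑ m ∈ Finset.range q, f (j + m) := by
        refine Finset.sum_congr rfl fun m _ => ?_
        simp only [hfdef]
        rw [show j + (m + 1) = (j + m) + 1 from by omega]
  -- outer closed walk
  set c2 : ℕ → Fin n := fun m => if m < j then c m else c (m + q) with hc2
  have hc2closed : c2 (p - q) = c2 0 := by
    simp only [hc2]
    rw [if_neg (by omega), show p - q + q = p from by omega, hc]
    by_cases h0 : 0 < j
    · rw [if_pos h0]
    · rw [if_neg h0, show (0:ℕ) + q = q from by omega,
        show q = k from by omega, ← hcjk, show j = 0 from by omega]
  have S2 : 0 ≤ ∑ m ∈ Finset.range (p - q), (K (c2 m) (c2 (m + 1)) - K (c2 m) (c2 m)) :=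
    ih (p - q) (by omega) c2 hc2closed
  -- rewrite outer sum
  have E2 : ∑ m ∈ Finset.range (p - q), (K (c2 m) (c2 (m + 1)) - K (c2 m) (c2 m))
      = ∑ m ∈ Finset.Ico 0 j, f m + ∑ m ∈ Finset.Ico j (p - q), f (m + q) := by
    rw [Finset.range_eq_Ico, ← Finset.sum_Ico_consecutive _ (Nat.zero_le j) (by omega)]
    congr 1
    · refine Finset.sum_congr rfl fun m hm => ?_
      have hm' : m < j := (Finset.mem_Ico.mp hm).2
      have h1 : c2 m = c m := by simp only [hc2]; rw [if_pos hm']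
      have h2 : c2 (m + 1) = c (m + 1) := by
        simp only [hc2]
        by_cases h : m + 1 < j
        · rw [if_pos h]
        · rw [if_neg h, show m + 1 + q = k from by omega, ← hcjk, show j = m + 1 from by omega]
      rw [h1, h2]
    · refine Finset.sum_congr rfl fun m hm => ?_
      have hm' : j ≤ m := (Finset.mem_Ico.mp hm).1
      have h1 : c2 m = c (m + q) := by simp only [hc2]; rw [if_neg (by omega)]
      have h2 : c2 (m + 1) = c (m + q + 1) := by
        simp only [hc2]; rw [if_neg (by omega), show m + 1 + q = m + q + 1 from by omega]
      rw [h1, h2]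
  have E2' : ∑ m ∈ Finset.Ico j (p - q), f (m + q) = ∑ m ∈ Finset.Ico k p, f m := by
    rw [Finset.sum_Ico_eq_sum_range, Finset.sum_Ico_eq_sum_range]
    rw [show p - q - j = p - k from by omega]
    refine Finset.sum_congr rfl fun m _ => ?_
    rw [show j + m + q = k + m from by omega]
  -- total sum decomposition
  have E1 : ∑ m ∈ Finset.Ico j k, f m = ∑ m ∈ Finset.range q, f (j + m) := by
    rw [Finset.sum_Ico_eq_sum_range]
  have E3 : ∑ m ∈ Finset.range p, f m
      = ∑ m ∈ Finset.Ico 0 j, f m + ∑ m ∈ Finset.Ico j k, f m + ∑ m ∈ Finset.Ico k p, f m := by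
    rw [Finset.range_eq_Ico, ← Finset.sum_Ico_consecutive f (Nat.zero_le k) (le_of_lt hk),
      ← Finset.sum_Ico_consecutive f (Nat.zero_le j) (le_of_lt hlt)]
  calc (0:ℝ) ≤ (∑ m ∈ Finset.Ico 0 j, f m + ∑ m ∈ Finset.Ico j (p - q), f (m + q))
        + ∑ m ∈ Finset.range q, f (j + m) := by rw [← E2]; linarith
    _ = ∑ m ∈ Finset.range p, f m := by rw [E2', E3, ← E1]; ring
lemma stmt5_bwd (K : Fin n → Fin n → ℝ)
    (H : ∀ σ : Equiv.Perm (Fin n), ∑ i, K i i ≤ ∑ i, K i (σ i)) :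
    ∀ (p : ℕ) (c : ℕ → Fin n), c p = c 0 →
      0 ≤ ∑ k ∈ Finset.range p, (K (c k) (c (k + 1)) - K (c k) (c k)) := by
  intro p
  induction p using Nat.strong_induction_on with
  | _ p ih =>
    intro c hc
    rcases Nat.eq_zero_or_pos p with rfl | hp
    · simp
    by_cases hinj : ∀ j < p, ∀ k < p, c j = c k → j = k
    · -- simple cycle: build a permutation
      classical
      set f : Fin n → Fin n := fun x =>
        if h : ∃ k, k < p ∧ c k = x then c ((h.choose + 1) % p) else x with hf
      have hmem : ∀ x (h : ∃ k, k < p ∧ c k = x), f x = c ((h.choose + 1) % p) := by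
        intro x h; simp only [hf, dif_pos h]
      have hnot : ∀ x, (¬ ∃ k, k < p ∧ c k = x) → f x = x := by
        intro x h; simp only [hf, dif_neg h]
      have key : ∀ k, k < p → f (c k) = c (k + 1) := by
        intro k hk
        have h : ∃ k', k' < p ∧ c k' = c k := ⟨k, hk, rfl⟩
        have hks := h.choose_spec
        have hck : h.choose = k := hinj _ hks.1 _ hk hks.2
        rw [hmem _ h, hck]
        rcases Nat.lt_or_ge (k + 1) p with h1 | h1
        · rw [Nat.mod_eq_of_lt h1]
        · have h1' : k + 1 = p := by omega
          rw [h1', Nat.mod_self, ← hc, ← h1']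
      have hfin : Function.Injective f := by
        intro x y hxy
        by_cases hx : ∃ k, k < p ∧ c k = x
        · by_cases hy : ∃ k, k < p ∧ c k = y
          · rw [hmem _ hx, hmem _ hy] at hxy
            have hx1 := hx.choose_spec
            have hy1 := hy.choose_spec
            have h2 : (hx.choose + 1) % p = (hy.choose + 1) % p :=
              hinj _ (Nat.mod_lt _ hp) _ (Nat.mod_lt _ hp) hxy
            have h3 : hx.choose = hy.choose := by
              rcases Nat.lt_or_ge (hx.choose + 1) p with ha | ha <;>
                rcases Nat.lt_or_ge (hy.choose + 1) p with hb | hb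
              · rw [Nat.mod_eq_of_lt ha, Nat.mod_eq_of_lt hb] at h2; omega
              · have hb' : hy.choose + 1 = p := by omega
                rw [Nat.mod_eq_of_lt ha, hb', Nat.mod_self] at h2; omega
              · have ha' : hx.choose + 1 = p := by omega
                rw [Nat.mod_eq_of_lt hb, ha', Nat.mod_self] at h2; omega
              · have := hx1.1; have := hy1.1; omega
            rw [← hx1.2, ← hy1.2, h3]
          · exfalso
            rw [hmem _ hx, hnot _ hy] at hxy
            exact hy ⟨(hx.choose + 1) % p, Nat.mod_lt _ hp, hxy⟩
        · by_cases hy : ∃ k, k < p ∧ c k = y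
          · exfalso
            rw [hmem _ hy, hnot _ hx] at hxy
            exact hx ⟨(hy.choose + 1) % p, Nat.mod_lt _ hp, hxy.symm⟩
          · rw [hnot _ hx, hnot _ hy] at hxy; exact hxy
      let σ : Equiv.Perm (Fin n) := Equiv.ofBijective f (Finite.injective_iff_bijective.mp hfin)
      have hσ : ∀ x, σ x = f x := fun x => rfl
      have h0 : (0:ℝ) ≤ ∑ i, (K i (σ i) - K i i) := by
        rw [Finset.sum_sub_distrib]
        have := H σ
        linarith
      have himg : ∑ i ∈ (Finset.range p).image c, (K i (σ i) - K i i)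
          = ∑ k ∈ Finset.range p, (K (c k) (c (k + 1)) - K (c k) (c k)) := by
        rw [Finset.sum_image (by
          intro a ha b hb hab
          exact hinj _ (Finset.mem_range.mp ha) _ (Finset.mem_range.mp hb) hab)]
        refine Finset.sum_congr rfl fun k hk => ?_
        rw [hσ, key k (Finset.mem_range.mp hk)]
      have hsub : ∑ i, (K i (σ i) - K i i) = ∑ i ∈ (Finset.range p).image c,
          (K i (σ i) - K i i) := by
        refine (Finset.sum_subset (Finset.subset_univ _) ?_).symm
        intro x _ hx
        have hfx : f x = x := by
          apply hnot
          rintro ⟨k, hk, hck⟩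
          exact hx (Finset.mem_image.mpr ⟨k, Finset.mem_range.mpr hk, hck⟩)
        rw [hσ, hfx]; ring
      rw [← himg, ← hsub]; exact h0
    · push_neg at hinj
      obtain ⟨j, hj, k, hk, hcjk, hjk⟩ := hinj
      rcases Nat.lt_or_ge j k with hlt | hge
      · exact split_step K p ih c hc j k hj hk hcjk hlt
      · have hlt : k < j := by omega
        exact split_step K p ih c hc k j hk hj hcjk.symm hlt

lemma stmt5_fwd (K : Fin n → Fin n → ℝ)
    (H : ∀ (p : ℕ) (c : ℕ → Fin n), c p = c 0 →
        0 ≤ ∑ k ∈ Finset.range p, (K (c k) (c (k + 1)) - K (c k) (c k))) :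
    ∀ (N : ℕ) (σ : Equiv.Perm (Fin n)), σ.support.card ≤ N →
      ∑ i, K i i ≤ ∑ i, K i (σ i) := by
  intro N
  induction N with
  | zero =>
    intro σ hσ
    have : σ = 1 := by
      rw [← Equiv.Perm.support_eq_empty_iff]
      exact Finset.card_eq_zero.mp (Nat.le_zero.mp hσ)
    simp [this]
  | succ N ihN =>
    intro σ hσ
    by_cases h1 : σ = 1
    · simp [h1]
    obtain ⟨i, hi⟩ : σ.support.Nonempty := by
      rw [Finset.nonempty_iff_ne_empty, Ne, Equiv.Perm.support_eq_empty_iff]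
      exact h1
    have hiσ : i ∈ σ.support := hi
    set S := (σ.cycleOf i).support with hS
    set m := S.card with hm
    have hcyc : σ.IsCycleOn (S : Set (Fin n)) := σ.isCycleOn_support_cycleOf i
    have hiS : i ∈ S := Equiv.Perm.mem_support_cycleOf_iff.mpr ⟨Equiv.Perm.SameCycle.refl σ i, hiσ⟩
    set c : ℕ → Fin n := fun k => (σ ^ k) i with hcdef
    have hclosed : c m = c 0 := by
      simp only [hcdef, pow_zero, Equiv.Perm.one_apply]
      exact hcyc.pow_card_apply hiS
    have horbit := H m c hclosed
    -- orbit sum equals sum over S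
    have hsum : ∑ k ∈ Finset.range m, (K (c k) (c (k + 1)) - K (c k) (c k))
        = ∑ j ∈ S, (K j (σ j) - K j j) := by
      refine Finset.sum_bij (fun a _ => c a) ?_ ?_ ?_ ?_
      · intro a _
        exact Equiv.Perm.mem_support_cycleOf_iff.mpr
          ⟨⟨(a : ℤ), by simp [hcdef]⟩, hiσ⟩
      · intro a ha b hb hab
        have := (hcyc.pow_apply_eq_pow_apply hiS).mp hab
        have ha' := Finset.mem_range.mp ha
        have hb' := Finset.mem_range.mp hb
        rwa [Nat.ModEq, Nat.mod_eq_of_lt ha', Nat.mod_eq_of_lt hb'] at this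
      · intro b hb
        obtain ⟨a, ha, hab⟩ := hcyc.exists_pow_eq hiS hb
        exact ⟨a, Finset.mem_range.mpr ha, hab⟩
      · intro a _
        have : c (a + 1) = σ (c a) := by
          simp only [hcdef, pow_succ', Equiv.Perm.mul_apply]
        rw [this]
    -- the permutation with the cycle of i removed
    set τ : Equiv.Perm (Fin n) := σ * (σ.cycleOf i)⁻¹ with hτdef
    have hτ1 : ∀ j ∈ S, τ j = j := by
      intro j hj
      have hsc : σ.SameCycle i j := (Equiv.Perm.mem_support_cycleOf_iff.mp hj).1
      have : (σ.cycleOf i)⁻¹ j = σ⁻¹ j := by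
        rw [Equiv.Perm.cycleOf_inv, Equiv.Perm.cycleOf_apply,
          if_pos ((Equiv.Perm.sameCycle_inv).mpr hsc)]
      rw [hτdef, Equiv.Perm.mul_apply, this]; simp
    have hτ2 : ∀ j, j ∉ S → τ j = σ j := by
      intro j hj
      have hsc : ¬ σ.SameCycle i j := fun h =>
        hj (Equiv.Perm.mem_support_cycleOf_iff.mpr ⟨h, hiσ⟩)
      have : (σ.cycleOf i)⁻¹ j = j := by
        rw [Equiv.Perm.cycleOf_inv, Equiv.Perm.cycleOf_apply,
          if_neg (fun h => hsc ((Equiv.Perm.sameCycle_inv).mp h))]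
      rw [hτdef, Equiv.Perm.mul_apply, this]
    have hτsupp : τ.support ⊆ σ.support.erase i := by
      intro j hj
      rw [Equiv.Perm.mem_support] at hj
      have hjS : j ∉ S := fun h => hj (hτ1 j h)
      rw [hτ2 j hjS] at hj
      exact Finset.mem_erase.mpr ⟨fun h => hjS (h ▸ hiS), Equiv.Perm.mem_support.mpr hj⟩
    have hcard : τ.support.card ≤ N := by
      have h2 := Finset.card_le_card hτsupp
      rw [Finset.card_erase_of_mem hiσ] at h2
      have h3 : 1 ≤ σ.support.card := Finset.card_pos.mpr ⟨i, hiσ⟩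
      omega
    have hτle := ihN τ hcard
    -- split the total sum
    have hsplit : ∑ j, K j (σ j) - ∑ j, K j (τ j) = ∑ j ∈ S, (K j (σ j) - K j j) := by
      rw [← Finset.sum_sub_distrib]
      rw [show ∑ j, (K j (σ j) - K j (τ j)) = ∑ j ∈ S, (K j (σ j) - K j (τ j)) from
        (Finset.sum_subset (Finset.subset_univ _) fun x _ hx => by
          rw [hτ2 x hx]; ring).symm]
      exact Finset.sum_congr rfl fun j hj => by rw [hτ1 j hj]
    rw [hsum] at horbit
    linarith
end Stmt5Aux

/-- cyclical monotonicity is equivalent to the identity being optimal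
for the assignment problem. -/
theorem stmt_5 {n : ℕ} (K : Fin n → Fin n → ℝ) :
    (∀ (p : ℕ) (c : ℕ → Fin n), c p = c 0 →
        0 ≤ ∑ k ∈ Finset.range p, (K (c k) (c (k + 1)) - K (c k) (c k)))
      ↔ (∀ σ : Equiv.Perm (Fin n), ∑ i, K i i ≤ ∑ i, K i (σ i)) := by
  constructor
  · intro H σ
    exact stmt5_fwd K H σ.support.card σ le_rfl
  · intro H
    exact stmt5_bwd K H
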